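/- For the Gumbel-trick δ-reweight, the expected per-token score with a watermark equals ln 2 minus exp(−H_2(P)): if a* = argmax_a {log P(a) + E(a)} for i.i.d. standard Gumbel variables (E(a))_{a∈Σ}, then E[ln 2 − exp(−E(a*))] = ln 2 − ∑_{a∈Σ} P(a)^2, where H_2(P) = −log ∑_a P(a)^2 is the Rényi entropy of order 2. -/

import Mathlib

open MeasureTheory Set Filter Topology
namespace GumbelAux



noncomputable def rho (g : ℝ) : ℝ := Real.exp (-g) * Real.exp (-Real.exp (-g))

lemma rho_nonneg (g : ℝ) : 0 ≤ rho g := by unfold rho; positivity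

lemma measurable_rho : Measurable rho := by unfold rho; fun_prop

lemma hasDerivAt_F (g : ℝ) :
    HasDerivAt (fun g => Real.exp (-Real.exp (-g))) (rho g) g := by
  have h1 : HasDerivAt (fun g : ℝ => -g) (-1) g := (hasDerivAt_id g).neg
  have h2 := h1.exp
  have h3 : HasDerivAt (fun g : ℝ => -Real.exp (-g)) (Real.exp (-g)) g := by
    exact h2.neg.congr_deriv (by ring)
  have h4 := h3.exp
  convert h4 using 1
  unfold rho; ring

lemma sq_le_four_exp {x : ℝ} (hx : 0 ≤ x) : x ^ 2 ≤ 4 * Real.exp x := by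
  have h := Real.add_one_le_exp (x / 2)
  have h2 : Real.exp (x / 2) * Real.exp (x / 2) = Real.exp x := by
    rw [← Real.exp_add]; ring_nf
  nlinarith [Real.exp_pos (x / 2)]

lemma rho_le (g : ℝ) : rho g ≤ 4 * Real.exp g := by
  set x := Real.exp (-g) with hxdef
  have hx0 : 0 < x := Real.exp_pos _
  have hxg : x * Real.exp g = 1 := by rw [hxdef, ← Real.exp_add]; simp
  have hkey : x ^ 2 ≤ 4 * Real.exp x := sq_le_four_exp hx0.le
  have hex : Real.exp x * Real.exp (-x) = 1 := by rw [← Real.exp_add]; simp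
  have h2 : x ^ 2 * Real.exp (-x) ≤ 4 := by nlinarith [Real.exp_pos (-x)]
  have : rho g = x * Real.exp (-x) := rfl
  rw [this]
  nlinarith [Real.exp_pos (-x), Real.exp_pos g]

lemma integrableOn_rho_Iic (t : ℝ) : IntegrableOn rho (Iic t) := by
  refine Integrable.mono' ((integrableOn_exp_Iic t).const_mul 4)
    measurable_rho.aestronglyMeasurable ?_
  filter_upwards with g
  rw [Real.norm_of_nonneg (rho_nonneg g)]
  exact rho_le g

lemma tendsto_F_atBot : Tendsto (fun g : ℝ => Real.exp (-Real.exp (-g))) atBot (𝓝 0) := by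
  have h2 : Tendsto (fun g : ℝ => Real.exp (-g)) atBot atTop :=
    Real.tendsto_exp_atTop.comp tendsto_neg_atBot_atTop
  have h3 : Tendsto (fun g : ℝ => -Real.exp (-g)) atBot atBot :=
    tendsto_neg_atTop_atBot.comp h2
  exact Real.tendsto_exp_atBot.comp h3

lemma integral_rho_Iic (t : ℝ) : ∫ g in Iic t, rho g = Real.exp (-Real.exp (-t)) := by
  have h := integral_Iic_of_hasDerivAt_of_tendsto' (a := t)
    (fun x _ => hasDerivAt_F x) (integrableOn_rho_Iic t) tendsto_F_atBot
  rw [h, sub_zero]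

noncomputable def gam : Measure ℝ := volume.withDensity fun g => ENNReal.ofReal (rho g)

lemma gam_Iic (t : ℝ) : gam (Iic t) = ENNReal.ofReal (Real.exp (-Real.exp (-t))) := by
  rw [gam, withDensity_apply _ measurableSet_Iic,
    ← ofReal_integral_eq_lintegral_ofReal (integrableOn_rho_Iic t) (ae_of_all _ rho_nonneg),
    integral_rho_Iic]

lemma gam_univ : gam univ = 1 := by
  have hU : (univ : Set ℝ) = ⋃ n : ℕ, Iic (n : ℝ) := by
    ext x
    simp only [mem_univ, mem_iUnion, mem_Iic, true_iff]
    exact ⟨⌈x⌉₊, Nat.le_ceil x⟩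
  have hmono : Monotone fun n : ℕ => Iic (n : ℝ) := fun m n h =>
    Iic_subset_Iic.2 (by exact_mod_cast h)
  rw [hU, hmono.directed_le.measure_iUnion]
  refine iSup_eq_of_tendsto (fun m n h => measure_mono (hmono h)) ?_
  have h1 : Tendsto (fun n : ℕ => -(n : ℝ)) atTop atBot :=
    tendsto_neg_atTop_atBot.comp tendsto_natCast_atTop_atTop
  have h2 : Tendsto (fun n : ℕ => Real.exp (-(n : ℝ))) atTop (𝓝 0) :=
    Real.tendsto_exp_atBot.comp h1
  have h3 : Tendsto (fun n : ℕ => Real.exp (-Real.exp (-(n : ℝ)))) atTop (𝓝 1) := by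
    have h2' : Tendsto (fun n : ℕ => -Real.exp (-(n : ℝ))) atTop (𝓝 0) := by simpa using h2.neg
    have := (Real.continuous_exp.tendsto 0).comp h2'
    simpa [Function.comp_def] using this
  have h4 : Tendsto (fun n : ℕ => gam (Iic (n : ℝ))) atTop (𝓝 (ENNReal.ofReal 1)) := by
    simp_rw [gam_Iic]
    exact (ENNReal.continuous_ofReal.tendsto 1).comp h3
  simpa using h4

instance : IsProbabilityMeasure gam := ⟨gam_univ⟩

lemma gam_singleton (x : ℝ) : gam {x} = 0 := by
  rw [gam, withDensity_apply _ (measurableSet_singleton x),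
    Measure.restrict_eq_zero.mpr (by simp), lintegral_zero_measure]

lemma gam_Iio (t : ℝ) : gam (Iio t) = ENNReal.ofReal (Real.exp (-Real.exp (-t))) := by
  refine le_antisymm ?_ ?_
  · rw [← gam_Iic t]; exact measure_mono Iio_subset_Iic_self
  · rw [← gam_Iic t]
    calc gam (Iic t) ≤ gam {t} + gam (Iio t) := by
          rw [← Iio_insert, Set.insert_eq]; exact measure_union_le _ _
      _ = gam (Iio t) := by rw [gam_singleton, zero_add]




noncomputable def G (c y : ℝ) : ℝ :=
  (Real.exp (-y) / c + 1 / c ^ 2) * Real.exp (-(Real.exp (-y) * c))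

noncomputable def h (c y : ℝ) : ℝ :=
  Real.exp (-(2 * y)) * Real.exp (-(Real.exp (-y) * c))

lemma h_nonneg (c y : ℝ) : 0 ≤ h c y := by unfold h; positivity

lemma measurable_h (c : ℝ) : Measurable (h c) := by unfold h; fun_prop

lemma hasDerivAt_G (c : ℝ) (hc : 0 < c) (y : ℝ) : HasDerivAt (G c) (h c y) y := by
  have h1 : HasDerivAt (fun y : ℝ => -y) (-1) y := (hasDerivAt_id y).neg
  have hexp : HasDerivAt (fun y : ℝ => Real.exp (-y)) (-Real.exp (-y)) y := by
    simpa using h1.exp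
  have hlin : HasDerivAt (fun y : ℝ => Real.exp (-y) / c + 1 / c ^ 2)
      (-Real.exp (-y) / c) y := (hexp.div_const c).add_const _
  have h2 : HasDerivAt (fun y : ℝ => -(Real.exp (-y) * c)) (Real.exp (-y) * c) y := by
    exact (hexp.mul_const c).neg.congr_deriv (by ring)
  have h3 := h2.exp
  have h4 := hlin.mul h3
  have hsq : Real.exp (-(2 * y)) = Real.exp (-y) * Real.exp (-y) := by
    rw [← Real.exp_add]; ring_nf
  refine h4.congr_deriv (Eq.symm ?_)
  unfold h
  rw [hsq]
  field_simp
  ring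

lemma cube_le_exp {x : ℝ} (hx : 0 ≤ x) : x ^ 3 ≤ 27 * Real.exp x := by
  have h1 : x / 3 ≤ Real.exp (x / 3) := by
    nlinarith [Real.add_one_le_exp (x / 3)]
  have h2 : (x / 3) ^ 3 ≤ Real.exp (x / 3) ^ 3 :=
    pow_le_pow_left₀ (by linarith) h1 3
  have h3 : Real.exp (x / 3) ^ 3 = Real.exp x := by
    rw [← Real.exp_nat_mul]; congr 1; push_cast; ring
  nlinarith [h2, h3]

lemma h_le_Iic {c : ℝ} (hc : 0 < c) (y : ℝ) : h c y ≤ 27 / c ^ 3 * Real.exp y := by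
  set x := Real.exp (-y) with hxdef
  have hx0 : 0 < x := Real.exp_pos _
  have hxy : x * Real.exp y = 1 := by rw [hxdef, ← Real.exp_add]; simp
  have hsq : Real.exp (-(2 * y)) = x ^ 2 := by
    rw [hxdef, sq, ← Real.exp_add]; ring_nf
  have hcube : (x * c) ^ 3 ≤ 27 * Real.exp (x * c) := cube_le_exp (by positivity)
  have hex : Real.exp (x * c) * Real.exp (-(x * c)) = 1 := by rw [← Real.exp_add]; simp
  have hepos := Real.exp_pos (-(x * c))
  have hkey : x ^ 3 * Real.exp (-(x * c)) ≤ 27 / c ^ 3 := by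
    have h1 : x ^ 3 * c ^ 3 * Real.exp (-(x * c)) ≤ 27 := by
      nlinarith [mul_le_mul_of_nonneg_right hcube hepos.le, hex]
    have hc3 : (0:ℝ) < c ^ 3 := by positivity
    have heq : x ^ 3 * Real.exp (-(x * c)) = x ^ 3 * c ^ 3 * Real.exp (-(x * c)) / c ^ 3 := by
      field_simp
    rw [heq]
    gcongr
  have hh : h c y = x ^ 2 * Real.exp (-(x * c)) := by unfold h; rw [hsq]
  have hx2 : x ^ 2 = x ^ 3 * Real.exp y := by linear_combination (-(x ^ 2)) * hxy
  calc h c y = x ^ 3 * Real.exp (-(x * c)) * Real.exp y := by rw [hh, hx2]; ring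
    _ ≤ 27 / c ^ 3 * Real.exp y :=
        mul_le_mul_of_nonneg_right hkey (Real.exp_pos y).le

lemma integrableOn_h_Iic (c : ℝ) (hc : 0 < c) : IntegrableOn (h c) (Iic 0) := by
  refine Integrable.mono' ((integrableOn_exp_Iic 0).const_mul (27 / c ^ 3))
    (measurable_h c).aestronglyMeasurable ?_
  filter_upwards with y
  rw [Real.norm_of_nonneg (h_nonneg c y)]
  exact h_le_Iic hc y

lemma integrableOn_h_Ioi (c : ℝ) (hc : 0 < c) : IntegrableOn (h c) (Ioi 0) := by
  have hbase : IntegrableOn (fun y : ℝ => Real.exp (-2 * y)) (Ioi 0) :=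
    exp_neg_integrableOn_Ioi 0 (by norm_num)
  refine Integrable.mono' hbase (measurable_h c).aestronglyMeasurable ?_
  filter_upwards with y
  rw [Real.norm_of_nonneg (h_nonneg c y)]
  unfold h
  have h1 : Real.exp (-(Real.exp (-y) * c)) ≤ 1 := by
    rw [Real.exp_le_one_iff]
    have := Real.exp_pos (-y)
    nlinarith
  have h2 : (0:ℝ) < Real.exp (-(2 * y)) := Real.exp_pos _
  calc Real.exp (-(2 * y)) * Real.exp (-(Real.exp (-y) * c))
      ≤ Real.exp (-(2 * y)) * 1 := by nlinarith
    _ = Real.exp (-2 * y) := by rw [mul_one]; ring_nf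

lemma tendsto_G_atTop (c : ℝ) (hc : 0 < c) : Tendsto (G c) atTop (𝓝 (1 / c ^ 2)) := by
  have hX : Tendsto (fun y : ℝ => Real.exp (-y)) atTop (𝓝 0) :=
    Real.tendsto_exp_atBot.comp tendsto_neg_atTop_atBot
  have h1 : Tendsto (fun y : ℝ => Real.exp (-y) / c + 1 / c ^ 2) atTop (𝓝 (0 / c + 1 / c ^ 2)) :=
    (hX.div_const c).add_const _
  have h2 : Tendsto (fun y : ℝ => -(Real.exp (-y) * c)) atTop (𝓝 (-(0 * c))) :=
    (hX.mul_const c).neg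
  have h3 : Tendsto (fun y : ℝ => Real.exp (-(Real.exp (-y) * c))) atTop (𝓝 (Real.exp (-(0 * c)))) :=
    (Real.continuous_exp.tendsto _).comp h2
  have h4 := h1.mul h3
  have hG : G c = fun y : ℝ => (Real.exp (-y) / c + 1 / c ^ 2) * Real.exp (-(Real.exp (-y) * c)) := rfl
  rw [hG]
  simpa [one_div] using h4

lemma tendsto_G_atBot (c : ℝ) (hc : 0 < c) : Tendsto (G c) atBot (𝓝 0) := by
  have hu : Tendsto (fun y : ℝ => Real.exp (-y) * c) atBot atTop :=
    (Real.tendsto_exp_atTop.comp tendsto_neg_atBot_atTop).atTop_mul_const hc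
  have hmul : Tendsto (fun u : ℝ => u * Real.exp (-u)) atTop (𝓝 0) := by
    have := Real.tendsto_pow_mul_exp_neg_atTop_nhds_zero 1
    simpa using this
  have hexp : Tendsto (fun u : ℝ => Real.exp (-u)) atTop (𝓝 0) :=
    Real.tendsto_exp_atBot.comp tendsto_neg_atTop_atBot
  have hcomb : Tendsto (fun u : ℝ => (1 / c ^ 2) * (u * Real.exp (-u)) + (1 / c ^ 2) * Real.exp (-u))
      atTop (𝓝 ((1 / c ^ 2) * 0 + (1 / c ^ 2) * 0)) :=
    ((hmul.const_mul _).add (hexp.const_mul _))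
  have h5 := hcomb.comp hu
  have heq : ∀ y : ℝ, ((fun u : ℝ => (1 / c ^ 2) * (u * Real.exp (-u)) + (1 / c ^ 2) * Real.exp (-u)) ∘
      (fun y : ℝ => Real.exp (-y) * c)) y = G c y := by
    intro y
    simp only [Function.comp_apply]
    unfold G
    field_simp
  rw [show ((0:ℝ)) = ((1 / c ^ 2) * 0 + (1 / c ^ 2) * 0) by ring]
  exact Tendsto.congr heq h5

lemma integral_h_Ioi (c : ℝ) (hc : 0 < c) : ∫ y in Ioi 0, h c y = 1 / c ^ 2 - G c 0 :=
  integral_Ioi_of_hasDerivAt_of_tendsto' (fun x _ => hasDerivAt_G c hc x)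
    (integrableOn_h_Ioi c hc) (tendsto_G_atTop c hc)

lemma integral_h_Iic (c : ℝ) (hc : 0 < c) : ∫ y in Iic 0, h c y = G c 0 - 0 :=
  integral_Iic_of_hasDerivAt_of_tendsto' (fun x _ => hasDerivAt_G c hc x)
    (integrableOn_h_Iic c hc) (tendsto_G_atBot c hc)

lemma lintegral_h (c : ℝ) (hc : 0 < c) :
    ∫⁻ y, ENNReal.ofReal (h c y) = ENNReal.ofReal (1 / c ^ 2) := by
  rw [← lintegral_add_compl (fun y => ENNReal.ofReal (h c y)) measurableSet_Iic,
    compl_Iic,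
    ← ofReal_integral_eq_lintegral_ofReal (integrableOn_h_Iic c hc) (ae_of_all _ (h_nonneg c)),
    ← ofReal_integral_eq_lintegral_ofReal (integrableOn_h_Ioi c hc) (ae_of_all _ (h_nonneg c)),
    integral_h_Iic c hc, integral_h_Ioi c hc,
    ← ENNReal.ofReal_add (by nlinarith [(integral_h_Iic c hc).symm ▸ integral_nonneg (h_nonneg c)]) (by nlinarith [(integral_h_Ioi c hc).symm ▸ integral_nonneg (h_nonneg c)])]
  congr 1
  ring


lemma exp_mul4 (A B C D : ℝ) :
    Real.exp A * Real.exp B * (Real.exp C * Real.exp D) = Real.exp (A + B + C + D) := by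
  rw [← Real.exp_add, ← Real.exp_add, ← Real.exp_add]; ring_nf

lemma lintegral_gam_main (p : ℝ) (hp : 0 < p) :
    ∫⁻ y, ENNReal.ofReal (Real.exp (-y)) *
        ENNReal.ofReal (Real.exp (-(Real.exp (-y) * ((1 - p) / p)))) ∂gam
      = ENNReal.ofReal (p ^ 2) := by
  rw [gam, lintegral_withDensity_eq_lintegral_mul _ measurable_rho.ennreal_ofReal (by fun_prop)]
  have heq : ∀ y : ℝ, ((fun y => ENNReal.ofReal (rho y)) * fun y =>
      ENNReal.ofReal (Real.exp (-y)) *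
        ENNReal.ofReal (Real.exp (-(Real.exp (-y) * ((1 - p) / p))))) y
      = ENNReal.ofReal (h (1 / p) y) := by
    intro y
    simp only [Pi.mul_apply]
    rw [← ENNReal.ofReal_mul (Real.exp_pos _).le,
      ← ENNReal.ofReal_mul (by unfold rho; positivity)]
    congr 1
    unfold rho h
    rw [exp_mul4, ← Real.exp_add]
    congr 1
    field_simp
    ring
  simp only [heq]
  rw [lintegral_h (1 / p) (by positivity)]
  congr 1
  field_simp

end GumbelAux

open MeasureTheory

/-- Expected per-token score of the Gumbel-trick δ-reweight: if `astar` is the argmax of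
`log P a + E a` for i.i.d. standard Gumbel variables `E a`, then
`E[ln 2 − exp (−E astar)] = ln 2 − ∑ a, P a ^ 2 = ln 2 − exp (−H₂(P))`. -/
theorem gumbel_trick_expected_score
    {Ω : Type*} [MeasurableSpace Ω] (μ : Measure Ω) [IsProbabilityMeasure μ]
    {S : Type*} [Fintype S] [Nonempty S]
    (P : S → ℝ) (hP : ∀ a, 0 < P a) (hPsum : ∑ a, P a = 1)
    (E : S → Ω → ℝ) (hEmeas : ∀ a, Measurable (E a))
    (hindep : ProbabilityTheory.iIndepFun E μ)
    (hgumbel : ∀ a, ∀ g : ℝ,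
      μ {ω | E a ω ≤ g} = ENNReal.ofReal (Real.exp (-Real.exp (-g))))
    (astar : Ω → S)
    (hastar : ∀ᵐ ω ∂μ, ∀ a : S,
      Real.log (P a) + E a ω ≤ Real.log (P (astar ω)) + E (astar ω) ω) :
    ∫ ω, (Real.log 2 - Real.exp (-(E (astar ω) ω))) ∂μ
      = Real.log 2 - ∑ a, (P a) ^ 2 := by
  classical
  -- the strict-argmax events
  set A : S → Set Ω := fun a =>
    {ω | ∀ b, b ≠ a → Real.log (P b) + E b ω < Real.log (P a) + E a ω} with hA
  have hAmeas : ∀ a, MeasurableSet (A a) := by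
    intro a
    have hrw : A a = ⋂ b, {ω | b ≠ a → Real.log (P b) + E b ω < Real.log (P a) + E a ω} := by
      ext ω; simp [hA, Set.mem_iInter]
    rw [hrw]
    refine MeasurableSet.iInter fun b => ?_
    by_cases hb : b = a
    · simp [hb]
    · have : {ω | b ≠ a → Real.log (P b) + E b ω < Real.log (P a) + E a ω}
          = {ω | Real.log (P b) + E b ω < Real.log (P a) + E a ω} := by
        ext ω; simp [hb]
      rw [this]
      exact measurableSet_lt (measurable_const.add (hEmeas b)) (measurable_const.add (hEmeas a))
  -- identification of the law of each E a
  have hlaw : ∀ a, μ.map (E a) = GumbelAux.gam := by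
    intro a
    haveI : IsProbabilityMeasure (μ.map (E a)) :=
      Measure.isProbabilityMeasure_map (hEmeas a).aemeasurable
    refine MeasureTheory.Measure.ext_of_Iic (μ.map (E a)) GumbelAux.gam fun t => ?_
    rw [Measure.map_apply (hEmeas a) measurableSet_Iic, GumbelAux.gam_Iic]
    exact hgumbel a t
  have hIio : ∀ b (t : ℝ), μ {ω | E b ω < t} = ENNReal.ofReal (Real.exp (-Real.exp (-t))) := by
    intro b t
    have hrw : {ω | E b ω < t} = E b ⁻¹' (Set.Iio t) := rfl
    rw [hrw, ← Measure.map_apply (hEmeas b) measurableSet_Iio, hlaw b, GumbelAux.gam_Iio]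
  -- ties are null
  have hties : ∀ a b : S, a ≠ b →
      μ {ω | Real.log (P a) + E a ω = Real.log (P b) + E b ω} = 0 := by
    intro a b hab
    have hind : ProbabilityTheory.IndepFun (E a) (E b) μ := hindep.indepFun hab
    have hmap := (ProbabilityTheory.indepFun_iff_map_prod_eq_prod_map_map
      (hEmeas a).aemeasurable (hEmeas b).aemeasurable).mp hind
    set c : ℝ := Real.log (P a) - Real.log (P b) with hc
    have hDm : MeasurableSet {q : ℝ × ℝ | q.2 = q.1 + c} :=
      measurableSet_eq_fun measurable_snd (measurable_fst.add_const c)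
    have hset : {ω | Real.log (P a) + E a ω = Real.log (P b) + E b ω}
        = (fun ω => (E a ω, E b ω)) ⁻¹' {q : ℝ × ℝ | q.2 = q.1 + c} := by
      ext ω
      simp only [Set.mem_setOf_eq, Set.mem_preimage, hc]
      constructor <;> intro h <;> linarith
    rw [hset, ← Measure.map_apply ((hEmeas a).prodMk (hEmeas b)) hDm, hmap,
      hlaw a, hlaw b, Measure.prod_apply hDm]
    have hfib : ∀ x : ℝ, (Prod.mk x ⁻¹' {q : ℝ × ℝ | q.2 = q.1 + c}) = {x + c} := by
      intro x; ext y; simp [Set.mem_preimage]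
    simp_rw [hfib, GumbelAux.gam_singleton]
    simp
  -- the key lintegral computation
  have hJ : ∀ a, ∫⁻ ω in A a, ENNReal.ofReal (Real.exp (-(E a ω))) ∂μ
      = ENNReal.ofReal ((P a) ^ 2) := by
    intro a
    set T : Finset S := Finset.univ.erase a with hT
    set W : Ω → ({x // x ∈ T} → ℝ) := fun ω b => E b.1 ω with hW
    have hWmeas : Measurable W := measurable_pi_lambda _ fun b => hEmeas b.1
    have hYW : ProbabilityTheory.IndepFun (E a) W μ := by
      have h1 := hindep.indepFun_finset {a} T (by simp [hT]) hEmeas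
      exact h1.comp (measurable_pi_apply (⟨a, by simp⟩ : {x // x ∈ ({a} : Finset S)}))
        measurable_id
    have hmap : μ.map (fun ω => (E a ω, W ω)) = (μ.map (E a)).prod (μ.map W) :=
      (ProbabilityTheory.indepFun_iff_map_prod_eq_prod_map_map
        (hEmeas a).aemeasurable hWmeas.aemeasurable).mp hYW
    set D : Set (ℝ × ({x // x ∈ T} → ℝ)) :=
      {q | ∀ b : {x // x ∈ T}, Real.log (P b.1) + q.2 b < Real.log (P a) + q.1} with hD
    have hDmeas : MeasurableSet D := by
      have hrw : D = ⋂ b : {x // x ∈ T},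
          {q : ℝ × ({x // x ∈ T} → ℝ) | Real.log (P b.1) + q.2 b < Real.log (P a) + q.1} := by
        ext q; simp [hD, Set.mem_iInter]
      rw [hrw]
      exact MeasurableSet.iInter fun b => measurableSet_lt (by fun_prop) (by fun_prop)
    have hAeq : A a = (fun ω => (E a ω, W ω)) ⁻¹' D := by
      ext ω
      simp only [hA, hD, Set.mem_setOf_eq, Set.mem_preimage]
      constructor
      · intro hcl b; exact hcl b.1 (Finset.ne_of_mem_erase b.2)
      · intro hcl b hb
        exact hcl ⟨b, Finset.mem_erase.mpr ⟨hb, Finset.mem_univ b⟩⟩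
    have hpairmeas : Measurable fun ω => (E a ω, W ω) := (hEmeas a).prodMk hWmeas
    haveI : IsProbabilityMeasure (μ.map W) := Measure.isProbabilityMeasure_map hWmeas.aemeasurable
    haveI : IsProbabilityMeasure (μ.map (E a)) :=
      Measure.isProbabilityMeasure_map (hEmeas a).aemeasurable
    have hfmeas : Measurable fun q : ℝ × ({x // x ∈ T} → ℝ) =>
        ENNReal.ofReal (Real.exp (-q.1)) := by fun_prop
    have hwsetmeas : ∀ x : ℝ, MeasurableSet
        {w : {x // x ∈ T} → ℝ | ∀ b : {x // x ∈ T}, Real.log (P b.1) + w b < Real.log (P a) + x} := by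
      intro x
      have hrw : {w : {x // x ∈ T} → ℝ | ∀ b : {x // x ∈ T},
          Real.log (P b.1) + w b < Real.log (P a) + x}
          = ⋂ b : {x // x ∈ T}, {w : {x // x ∈ T} → ℝ |
              Real.log (P b.1) + w b < Real.log (P a) + x} := by
        ext w; simp [Set.mem_iInter]
      rw [hrw]
      exact MeasurableSet.iInter fun b => measurableSet_lt
        (measurable_const.add (measurable_pi_apply b)) measurable_const
    have hstep1 : ∫⁻ ω in A a, ENNReal.ofReal (Real.exp (-(E a ω))) ∂μ
        = ∫⁻ q in D, ENNReal.ofReal (Real.exp (-q.1)) ∂((μ.map (E a)).prod (μ.map W)) := by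
      rw [← hmap, setLIntegral_map hDmeas hfmeas hpairmeas, ← hAeq]
    have hWset : ∀ x : ℝ, (μ.map W) {w : {x // x ∈ T} → ℝ | ∀ b : {x // x ∈ T},
        Real.log (P b.1) + w b < Real.log (P a) + x}
        = ENNReal.ofReal (Real.exp (-(Real.exp (-x) * ((1 - P a) / P a)))) := by
      intro x
      rw [Measure.map_apply hWmeas (hwsetmeas x)]
      have hpre : W ⁻¹' {w : {x // x ∈ T} → ℝ | ∀ b : {x // x ∈ T},
          Real.log (P b.1) + w b < Real.log (P a) + x}
          = ⋂ b ∈ T, E b ⁻¹' (Set.Iio (Real.log (P a) + x - Real.log (P b))) := by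
        ext ω
        simp only [Set.mem_preimage, Set.mem_setOf_eq, Set.mem_iInter, hW, Set.mem_Iio]
        constructor
        · intro hcl b hb
          have := hcl ⟨b, hb⟩
          linarith
        · intro hcl b
          have := hcl b.1 b.2
          linarith
      rw [hpre, hindep.meas_biInter (fun b hb => ⟨Set.Iio _, measurableSet_Iio, rfl⟩)]
      have hsumT : ∑ b ∈ T, P b = 1 - P a := by
        have h := Finset.sum_erase_add Finset.univ P (Finset.mem_univ a)
        rw [hT]
        rw [hPsum] at h
        linarith
      have hval : ∀ b ∈ T, μ (E b ⁻¹' Set.Iio (Real.log (P a) + x - Real.log (P b)))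
          = ENNReal.ofReal (Real.exp (-(Real.exp (-x) * (P b / P a)))) := by
        intro b hb
        rw [show E b ⁻¹' Set.Iio (Real.log (P a) + x - Real.log (P b))
          = {ω | E b ω < Real.log (P a) + x - Real.log (P b)} from rfl, hIio b]
        congr 2
        rw [show -(Real.log (P a) + x - Real.log (P b))
          = Real.log (P b) - Real.log (P a) + (-x) from by ring,
          Real.exp_add, Real.exp_sub, Real.exp_log (hP b), Real.exp_log (hP a)]
        ring
      rw [Finset.prod_congr rfl hval,
        ← ENNReal.ofReal_prod_of_nonneg (fun _ _ => (Real.exp_pos _).le)]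
      congr 1
      rw [← Real.exp_sum]
      congr 1
      rw [show (∑ b ∈ T, -(Real.exp (-x) * (P b / P a)))
        = -(Real.exp (-x) * ((∑ b ∈ T, P b) / P a)) from by
          rw [Finset.sum_div, Finset.mul_sum, ← Finset.sum_neg_distrib]]
      rw [hsumT]
    have hstep2 : ∫⁻ q in D, ENNReal.ofReal (Real.exp (-q.1)) ∂((μ.map (E a)).prod (μ.map W))
        = ∫⁻ x, ENNReal.ofReal (Real.exp (-x)) *
            ENNReal.ofReal (Real.exp (-(Real.exp (-x) * ((1 - P a) / P a)))) ∂(μ.map (E a)) := by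
      rw [← lintegral_indicator hDmeas,
        lintegral_prod _ ((hfmeas.indicator hDmeas).aemeasurable)]
      congr 1
      ext x
      have hin : ∀ w, D.indicator (fun q => ENNReal.ofReal (Real.exp (-q.1))) (x, w)
          = ({w : {x // x ∈ T} → ℝ | ∀ b : {x // x ∈ T},
              Real.log (P b.1) + w b < Real.log (P a) + x}).indicator
              (fun _ => ENNReal.ofReal (Real.exp (-x))) w := by
        intro w
        by_cases hmem : (x, w) ∈ D
        · rw [Set.indicator_of_mem hmem, Set.indicator_of_mem]
          exact hmem
        · rw [Set.indicator_of_notMem hmem, Set.indicator_of_notMem]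
          exact hmem
      simp_rw [hin]
      rw [lintegral_indicator (hwsetmeas x), setLIntegral_const, hWset x]
    rw [hstep1, hstep2, hlaw a]
    exact GumbelAux.lintegral_gam_main (P a) (hP a)
  -- the measurable stand-in for exp (-(E astar))
  set greal : Ω → ℝ := fun ω =>
    ∑ a, (A a).indicator (fun ω => Real.exp (-(E a ω))) ω with hgreal
  have hgmeas : Measurable greal := by
    refine Finset.measurable_sum _ fun a _ => ?_
    exact (Real.measurable_exp.comp (hEmeas a).neg).indicator (hAmeas a)
  have hgnonneg : ∀ ω, 0 ≤ greal ω :=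
    fun ω => Finset.sum_nonneg fun a _ =>
      Set.indicator_nonneg (fun _ _ => (Real.exp_pos _).le) ω
  -- a.e. no ties
  have hT : ∀ᵐ ω ∂μ, ∀ a b : S, a ≠ b →
      Real.log (P a) + E a ω ≠ Real.log (P b) + E b ω := by
    rw [ae_all_iff]
    intro a
    rw [ae_all_iff]
    intro b
    by_cases hab : a = b
    · filter_upwards with ω h; exact absurd hab h
    · rw [ae_iff]
      have : {ω | ¬(a ≠ b → Real.log (P a) + E a ω ≠ Real.log (P b) + E b ω)}
          = {ω | Real.log (P a) + E a ω = Real.log (P b) + E b ω} := by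
        ext ω; simp [hab]
      rw [this]
      exact hties a b hab
  have hae : ∀ᵐ ω ∂μ, Real.exp (-(E (astar ω) ω)) = greal ω := by
    filter_upwards [hastar, hT] with ω hω hTω
    have ha0 : ω ∈ A (astar ω) := by
      intro b hb
      exact lt_of_le_of_ne (hω b) (hTω b (astar ω) hb)
    show Real.exp (-(E (astar ω) ω))
      = ∑ a, (A a).indicator (fun ω => Real.exp (-(E a ω))) ω
    rw [Finset.sum_eq_single (astar ω)]
    · rw [Set.indicator_of_mem ha0]
    · intro b _ hb
      rw [Set.indicator_of_notMem]
      intro hbmem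
      have h1 := hbmem (astar ω) (Ne.symm hb)
      have h2 := hω b
      linarith
    · intro h; exact absurd (Finset.mem_univ (astar ω)) h
  -- lintegral of greal
  have hgl : ∫⁻ ω, ENNReal.ofReal (greal ω) ∂μ = ENNReal.ofReal (∑ a, (P a) ^ 2) := by
    have h1 : ∀ ω, ENNReal.ofReal (greal ω)
        = ∑ a, ENNReal.ofReal ((A a).indicator (fun ω => Real.exp (-(E a ω))) ω) := by
      intro ω
      rw [hgreal]
      exact ENNReal.ofReal_sum_of_nonneg fun a _ =>
        Set.indicator_nonneg (fun _ _ => (Real.exp_pos _).le) ω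
    simp_rw [h1]
    have hms : ∀ a ∈ Finset.univ, Measurable fun ω =>
        ENNReal.ofReal ((A a).indicator (fun ω => Real.exp (-(E a ω))) ω) := by
      intro a _
      exact ((Real.measurable_exp.comp (hEmeas a).neg).indicator (hAmeas a)).ennreal_ofReal
    rw [lintegral_finset_sum _ hms]
    have h2 : ∀ a, ∫⁻ ω, ENNReal.ofReal ((A a).indicator (fun ω => Real.exp (-(E a ω))) ω) ∂μ
        = ENNReal.ofReal ((P a) ^ 2) := by
      intro a
      have h3 : ∀ ω, ENNReal.ofReal ((A a).indicator (fun ω => Real.exp (-(E a ω))) ω)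
          = (A a).indicator (fun ω => ENNReal.ofReal (Real.exp (-(E a ω)))) ω := by
        intro ω
        by_cases hmem : ω ∈ A a
        · rw [Set.indicator_of_mem hmem, Set.indicator_of_mem hmem]
        · rw [Set.indicator_of_notMem hmem, Set.indicator_of_notMem hmem, ENNReal.ofReal_zero]
      simp_rw [h3]
      rw [lintegral_indicator (hAmeas a)]
      exact hJ a
    simp_rw [h2]
    rw [← ENNReal.ofReal_sum_of_nonneg fun a _ => sq_nonneg _]
  have hgint : Integrable greal μ := by
    refine ⟨hgmeas.aestronglyMeasurable, ?_⟩
    rw [hasFiniteIntegral_iff_ofReal (ae_of_all _ hgnonneg), hgl]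
    exact ENNReal.ofReal_lt_top
  have hint : ∫ ω, greal ω ∂μ = ∑ a, (P a) ^ 2 := by
    rw [integral_eq_lintegral_of_nonneg_ae (ae_of_all _ hgnonneg) hgmeas.aestronglyMeasurable,
      hgl, ENNReal.toReal_ofReal (Finset.sum_nonneg fun a _ => sq_nonneg _)]
  calc ∫ ω, (Real.log 2 - Real.exp (-(E (astar ω) ω))) ∂μ
      = ∫ ω, (Real.log 2 - greal ω) ∂μ :=
        integral_congr_ae (hae.mono fun ω h => by dsimp only; rw [h])
    _ = ∫ _ω, Real.log 2 ∂μ - ∫ ω, greal ω ∂μ := integral_sub (integrable_const _) hgint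
    _ = Real.log 2 - ∑ a, (P a) ^ 2 := by
        rw [hint, integral_const, probReal_univ, one_smul]
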